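/- Let h, δh : I → ℝ be C¹ with δh compactly supported in I, let λ > 0, and define f_t on U = {(ξ,η) : ξ ∈ I} by f_t(ξ,η) = λ if η < h(ξ) + t·δh(ξ) and 0 otherwise. Let a : U → ℝ be continuous and bounded. Then lim_{t→0} (1/t) ∫_U a(ξ,η)(f_t − f_0)(ξ,η) dξ dη = λ ∫_I a(ξ, h(ξ)) δh(ξ) dξ. -/

import Mathlib

open MeasureTheory Filter Topology

lemma inner_eq (g : ℝ → ℝ) (hg : Continuous g) (c d lam : ℝ) :
    ∫ η : ℝ, g η * ((if η < d then lam else 0) - (if η < c then lam else 0))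
      = lam * ∫ η in c..d, g η := by
  have hpt : ∀ η : ℝ, g η * ((if η < d then lam else 0) - (if η < c then lam else 0))
      = lam * ((Set.Ico c d).indicator g η - (Set.Ico d c).indicator g η) := by
    intro η
    by_cases h1 : η < d <;> by_cases h2 : η < c <;>
      simp [Set.indicator_apply, Set.mem_Ico, h1, h2, not_lt.mp] <;> ring
  have hint : ∀ u v : ℝ, Integrable ((Set.Ico u v).indicator g) := by
    intro u v
    rw [← integrableOn_iff_integrable_of_support_subset Set.support_indicator_subset]
    exact (hg.integrableOn_Icc.mono_set Set.Ico_subset_Icc_self).congr_fun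
      (fun x hx => (Set.indicator_of_mem hx g).symm) measurableSet_Ico
  calc ∫ η : ℝ, g η * ((if η < d then lam else 0) - (if η < c then lam else 0))
      = ∫ η : ℝ, lam * ((Set.Ico c d).indicator g η - (Set.Ico d c).indicator g η) := by
        simp_rw [hpt]
    _ = lam * ((∫ η, (Set.Ico c d).indicator g η) - ∫ η, (Set.Ico d c).indicator g η) := by
        rw [integral_const_mul, integral_sub (hint c d) (hint d c)]
    _ = lam * ∫ η in c..d, g η := by
        rw [integral_indicator measurableSet_Ico, integral_indicator measurableSet_Ico,
          integral_Ico_eq_integral_Ioo, integral_Ico_eq_integral_Ioo,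
          intervalIntegral, integral_Ioc_eq_integral_Ioo, integral_Ioc_eq_integral_Ioo]


lemma fv_ptwise (a : ℝ × ℝ → ℝ) (ha : Continuous a) (ξ c d : ℝ) :
    Tendsto (fun t : ℝ => (1 / t) * ∫ η in c..(c + t * d), a (ξ, η)) (𝓝[≠] 0)
      (𝓝 (a (ξ, c) * d)) := by
  have hacont : Continuous fun η => a (ξ, η) := ha.comp (continuous_const.prodMk continuous_id)
  have hΦ : HasDerivAt (fun x => ∫ η in c..x, a (ξ, η)) (a (ξ, c)) c :=
    intervalIntegral.integral_hasDerivAt_right (hacont.intervalIntegrable c c)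
      (hacont.stronglyMeasurableAtFilter _ _) hacont.continuousAt
  have hl : HasDerivAt (fun t : ℝ => c + t * d) d 0 := by
    simpa using ((hasDerivAt_id (0:ℝ)).mul_const d).const_add c
  have hΦ' : HasDerivAt (fun x => ∫ η in c..x, a (ξ, η)) (a (ξ, c))
      ((fun t : ℝ => c + t * d) 0) := by simpa using hΦ
  have hψ : HasDerivAt (fun t : ℝ => ∫ η in c..(c + t * d), a (ξ, η)) (a (ξ, c) * d) 0 :=
    (hΦ'.comp 0 hl :)
  refine (hasDerivAt_iff_tendsto_slope.mp hψ).congr fun t => ?_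
  simp [slope_def_field, intervalIntegral.integral_same, div_eq_inv_mul, one_div]

lemma fv_Gcont (a : ℝ × ℝ → ℝ) (ha : Continuous a) (h δh : ℝ → ℝ) (hh : Continuous h)
    (hδ : Continuous δh) (t : ℝ) :
    Continuous fun ξ => ∫ η in (h ξ)..(h ξ + t * δh ξ), a (ξ, η) := by
  have hu : Continuous (Function.uncurry fun ξ η => a (ξ, η)) :=
    ha.comp (continuous_fst.prodMk continuous_snd)
  have c1 : Continuous fun ξ => ∫ η in (0:ℝ)..(h ξ + t * δh ξ), a (ξ, η) :=
    intervalIntegral.continuous_parametric_intervalIntegral_of_continuous hu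
      (hh.add (continuous_const.mul hδ))
  have c2 : Continuous fun ξ => ∫ η in (0:ℝ)..(h ξ), a (ξ, η) :=
    intervalIntegral.continuous_parametric_intervalIntegral_of_continuous hu hh
  have heq : ∀ ξ, ∫ η in (h ξ)..(h ξ + t * δh ξ), a (ξ, η)
      = (∫ η in (0:ℝ)..(h ξ + t * δh ξ), a (ξ, η)) - ∫ η in (0:ℝ)..(h ξ), a (ξ, η) := by
    intro ξ
    have hacont : Continuous fun η => a (ξ, η) := ha.comp (continuous_const.prodMk continuous_id)
    rw [intervalIntegral.integral_interval_sub_left (hacont.intervalIntegrable _ _)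
      (hacont.intervalIntegrable _ _)]
  exact (c1.sub c2).congr fun ξ => (heq ξ).symm

lemma fv_stepA (A B : ℝ) (hAB : A < B) (h δh : ℝ → ℝ) (hh : Continuous h) (hδ : Continuous δh)
    (lam : ℝ) (hlam : 0 ≤ lam) (a : ℝ × ℝ → ℝ) (ha : Continuous a)
    (C : ℝ) (hC : ∀ p, |a p| ≤ C) (t : ℝ) :
    ∫ p in (Set.Ioo A B) ×ˢ (Set.univ : Set ℝ),
        a p * ((if p.2 < h p.1 + t * δh p.1 then lam else 0) -
               (if p.2 < h p.1 then lam else 0))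
      = lam * ∫ ξ in Set.Ioo A B, ∫ η in (h ξ)..(h ξ + t * δh ξ), a (ξ, η) := by
  set F : ℝ × ℝ → ℝ := fun p =>
    a p * ((if p.2 < h p.1 + t * δh p.1 then lam else 0) - (if p.2 < h p.1 then lam else 0))
    with hF
  obtain ⟨Mh, hMh⟩ := isCompact_Icc.exists_bound_of_continuousOn (hh.continuousOn (s := Set.Icc A B))
  obtain ⟨Mδ, hMδ⟩ := isCompact_Icc.exists_bound_of_continuousOn (hδ.continuousOn (s := Set.Icc A B))
  have hMδ0 : 0 ≤ Mδ := le_trans (norm_nonneg _) (hMδ A ⟨le_refl _, hAB.le⟩)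
  have hprod : 0 ≤ |t| * Mδ := mul_nonneg (abs_nonneg t) hMδ0
  set R : ℝ := Mh + |t| * Mδ + 1 with hR
  set K : Set (ℝ × ℝ) := Set.Icc A B ×ˢ Set.Icc (-R) R with hK
  -- F vanishes on Icc A B × complement
  have hvanish : ∀ p : ℝ × ℝ, p.1 ∈ Set.Icc A B → p ∉ K → F p = 0 := by
    rintro ⟨ξ, η⟩ hξ hpK
    have hη : η ∉ Set.Icc (-R) R := fun hmem => hpK ⟨hξ, hmem⟩
    have h1 : |h ξ| ≤ Mh := hMh ξ hξ
    have h2 : |δh ξ| ≤ Mδ := hMδ ξ hξ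
    have h3 : |h ξ + t * δh ξ| ≤ Mh + |t| * Mδ := by
      calc |h ξ + t * δh ξ| ≤ |h ξ| + |t * δh ξ| := abs_add_le _ _
        _ ≤ Mh + |t| * Mδ := by rw [abs_mul]; gcongr
    rw [Set.mem_Icc, not_and_or, not_le, not_le] at hη
    have hb1 := abs_le.mp h1
    have hb3 := abs_le.mp h3
    rcases hη with hη | hη
    · -- η < -R : both indicators are lam
      have e1 : η < h ξ + t * δh ξ := by simp only [hR] at hη; linarith [hb3.1]
      have e2 : η < h ξ := by simp only [hR] at hη; linarith [hb1.1, hprod]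
      simp [hF, e1, e2]
    · -- η > R : both indicators are 0
      have e1 : ¬ η < h ξ + t * δh ξ := by simp only [hR] at hη; push_neg; linarith [hb3.2]
      have e2 : ¬ η < h ξ := by simp only [hR] at hη; push_neg; linarith [hb1.2, hprod]
      simp [hF, e1, e2]
  have hC0 : 0 ≤ C := le_trans (abs_nonneg _) (hC (0, 0))
  -- measurability
  have hFm : Measurable F := by
    have m1 : Measurable fun p : ℝ × ℝ => if p.2 < h p.1 + t * δh p.1 then lam else (0:ℝ) :=
      Measurable.ite (measurableSet_lt measurable_snd
        (((hh.comp continuous_fst).add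
          (continuous_const.mul (hδ.comp continuous_fst))).measurable)) measurable_const
        measurable_const
    have m2 : Measurable fun p : ℝ × ℝ => if p.2 < h p.1 then lam else (0:ℝ) :=
      Measurable.ite (measurableSet_lt measurable_snd ((hh.comp continuous_fst).measurable))
        measurable_const measurable_const
    exact ha.measurable.mul (m1.sub m2)
  have hKmeas : MeasurableSet K := (measurableSet_Icc.prod measurableSet_Icc)
  have hKcomp : IsCompact K := isCompact_Icc.prod isCompact_Icc
  have hImeas : MeasurableSet ((Set.Ioo A B) ×ˢ (Set.univ : Set ℝ)) :=
    measurableSet_Ioo.prod MeasurableSet.univ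
  -- integrability
  have hFint : IntegrableOn F ((Set.Ioo A B) ×ˢ (Set.univ : Set ℝ)) := by
    refine Integrable.mono' (g := K.indicator fun _ => C * lam)
      (((integrable_indicator_iff hKmeas).2
        (integrableOn_const hKcomp.measure_lt_top.ne)).restrict)
      (hFm.aestronglyMeasurable.restrict) ?_
    filter_upwards [ae_restrict_mem hImeas] with p hp
    by_cases hpK : p ∈ K
    · rw [Set.indicator_of_mem hpK]
      have hd : |(if p.2 < h p.1 + t * δh p.1 then lam else 0) -
          (if p.2 < h p.1 then lam else 0)| ≤ lam := by
        split_ifs <;> simp [abs_of_nonneg hlam, hlam]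
      calc ‖F p‖ = |a p| * |_| := abs_mul _ _
        _ ≤ C * lam := mul_le_mul (hC p) hd (abs_nonneg _) hC0
    · rw [Set.indicator_of_notMem hpK]
      have : F p = 0 := hvanish p (Set.Ioo_subset_Icc_self hp.1) hpK
      simp [this]
  -- Fubini
  rw [Measure.volume_eq_prod] at hFint ⊢
  rw [setIntegral_prod F hFint]
  simp only [Measure.restrict_univ]
  have hinner : ∀ ξ, (∫ η, F (ξ, η)) = lam * ∫ η in (h ξ)..(h ξ + t * δh ξ), a (ξ, η) := by
    intro ξ
    have := inner_eq (fun η => a (ξ, η)) (ha.comp (continuous_const.prodMk continuous_id))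
      (h ξ) (h ξ + t * δh ξ) lam
    simpa [hF] using this
  rw [integral_congr_ae (Filter.Eventually.of_forall hinner), integral_const_mul]

/-- first variation of `∫ a f` under a normal perturbation of the
graph `η = h(ξ)`: with `f_t = lam·1_{η < h(ξ)+t δh(ξ)}` on `U = I × ℝ`,
`lim_{t→0} (1/t) ∫_U a (f_t − f_0) = lam ∫_I a(ξ, h(ξ)) δh(ξ) dξ`. -/
theorem first_variation (A B : ℝ) (hAB : A < B) (h δh : ℝ → ℝ)
    (hh : ContDiff ℝ 1 h) (hδh : ContDiff ℝ 1 δh)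
    (hsupp : tsupport δh ⊆ Set.Ioo A B)
    (lam : ℝ) (hlam : 0 < lam)
    (a : ℝ × ℝ → ℝ) (ha : Continuous a) (hab : ∃ C, ∀ p, |a p| ≤ C) :
    Tendsto (fun t : ℝ =>
        (1 / t) * ∫ p in (Set.Ioo A B) ×ˢ (Set.univ : Set ℝ),
          a p * ((if p.2 < h p.1 + t * δh p.1 then lam else 0) -
                 (if p.2 < h p.1 then lam else 0)))
      (𝓝[≠] 0)
      (𝓝 (lam * ∫ ξ in Set.Ioo A B, a (ξ, h ξ) * δh ξ)) := by
  obtain ⟨C, hC⟩ := hab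
  have hC0 : 0 ≤ C := le_trans (abs_nonneg _) (hC (0, 0))
  have hhc := hh.continuous
  have hδc := hδh.continuous
  -- dominated convergence for the iterated integral
  have key : Tendsto
      (fun t : ℝ => ∫ ξ in Set.Ioo A B, (1 / t) * ∫ η in (h ξ)..(h ξ + t * δh ξ), a (ξ, η))
      (𝓝[≠] 0) (𝓝 (∫ ξ in Set.Ioo A B, a (ξ, h ξ) * δh ξ)) := by
    refine tendsto_integral_filter_of_dominated_convergence (fun ξ => C * |δh ξ|)
      (Eventually.of_forall fun t => ?_) ?_ ?_ (Eventually.of_forall fun ξ => ?_)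
    · exact ((continuous_const.mul (fv_Gcont a ha h δh hhc hδc t)).aestronglyMeasurable).restrict
    · filter_upwards [self_mem_nhdsWithin] with t (ht : t ≠ 0)
      refine Eventually.of_forall fun ξ => ?_
      have hb : ‖∫ η in (h ξ)..(h ξ + t * δh ξ), a (ξ, η)‖
          ≤ C * |h ξ + t * δh ξ - h ξ| :=
        intervalIntegral.norm_integral_le_of_norm_le_const fun x _ => hC (ξ, x)
      have habs : |h ξ + t * δh ξ - h ξ| = |t| * |δh ξ| := by
        rw [add_sub_cancel_left, abs_mul]
      rw [norm_mul]
      calc ‖(1:ℝ) / t‖ * ‖∫ η in (h ξ)..(h ξ + t * δh ξ), a (ξ, η)‖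
          ≤ |1 / t| * (C * (|t| * |δh ξ|)) := by
            rw [habs] at hb; exact mul_le_mul_of_nonneg_left hb (abs_nonneg _)
        _ = C * |δh ξ| := by
            rw [abs_div, abs_one]
            field_simp
    · exact ((continuous_const.mul hδc.abs).integrableOn_Icc).mono_set Set.Ioo_subset_Icc_self
    · exact fv_ptwise a ha ξ (h ξ) (δh ξ)
  have key2 := key.const_mul lam
  refine key2.congr fun t => ?_
  rw [fv_stepA A B hAB h δh hhc hδc lam hlam.le a ha C hC t, integral_const_mul]
  ring
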